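/- Let D : V → V be k-strictly pseudo-contractive and P : V → V be θ-averaged, with k, θ ∈ (0,1] and k < 1 − θ. Then the composition D∘P is l-strictly pseudo-contractive with l = k(1−θ)/((1−θ) − kθ), and 0 ≤ l < 1. -/

import Mathlib

private lemma stmt_5_aux (k θ A s vn : ℝ) (hk0 : 0 < k) (hθ0 : 0 < θ)
    (hkθ : k < 1 - θ) (hA0 : 0 ≤ A) (hs0 : 0 ≤ s) (hv0 : 0 ≤ vn)
    (hvA : vn ≤ A + θ * s) :
    k * vn ^ 2 ≤ (k * (1 - θ) / ((1 - θ) - k * θ)) * A ^ 2 + θ * (1 - θ) * s ^ 2 := by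
  have hden : 0 < (1 - θ) - k * θ := by nlinarith
  have h1 : k * vn ^ 2 ≤ k * (A + θ * s) ^ 2 := by
    have h := pow_le_pow_left₀ hv0 hvA 2
    exact mul_le_mul_of_nonneg_left h hk0.le
  have expand : (k * (1 - θ) / ((1 - θ) - k * θ)) * A ^ 2 + θ * (1 - θ) * s ^ 2
      = (k * (1-θ) * A^2 + ((1-θ) - k*θ) * (θ*(1-θ)) * s^2) / ((1-θ) - k*θ) := by
    field_simp
  rw [expand, le_div_iff₀ hden]
  nlinarith [sq_nonneg (k * A - ((1-θ) - k*θ) * s), mul_pos hθ0 hk0]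

theorem stmt_5 {V : Type*} [NormedAddCommGroup V] [InnerProductSpace ℝ V]
    [CompleteSpace V] (D P : V → V) (k θ : ℝ)
    (hk0 : 0 < k) (hk1 : k ≤ 1) (hθ0 : 0 < θ) (hθ1 : θ ≤ 1)
    (hkθ : k < 1 - θ)
    (hD : ∀ x y : V, ‖D x - D y‖ ^ 2 ≤ ‖x - y‖ ^ 2 + k * ‖(x - D x) - (y - D y)‖ ^ 2)
    (hP : ∃ N : V → V, (∀ x y : V, ‖N x - N y‖ ≤ ‖x - y‖) ∧
      ∀ x : V, P x = (1 - θ) • x + θ • N x) :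
    (0 ≤ k * (1 - θ) / ((1 - θ) - k * θ) ∧ k * (1 - θ) / ((1 - θ) - k * θ) < 1) ∧
    ∀ x y : V, ‖D (P x) - D (P y)‖ ^ 2
      ≤ ‖x - y‖ ^ 2 + (k * (1 - θ) / ((1 - θ) - k * θ)) *
          ‖(x - D (P x)) - (y - D (P y))‖ ^ 2 := by
  obtain ⟨N, hN, hPd⟩ := hP
  have hden : 0 < (1 - θ) - k * θ := by nlinarith
  have hl0 : 0 ≤ k * (1 - θ) / ((1 - θ) - k * θ) := by
    apply div_nonneg <;> nlinarith
  have hl1 : k * (1 - θ) / ((1 - θ) - k * θ) < 1 := by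
    rw [div_lt_one hden]; nlinarith
  refine ⟨⟨hl0, hl1⟩, fun x y => ?_⟩
  set a : V := x - y with ha
  set b : V := N x - N y with hb
  set u : V := (x - P x) - (y - P y) with hu0
  set v : V := (P x - D (P x)) - (P y - D (P y)) with hv0
  have hu : u = θ • (a - b) := by
    rw [hu0, ha, hb, hPd x, hPd y]; module
  have hpq : P x - P y = (1 - θ) • a + θ • b := by
    rw [ha, hb, hPd x, hPd y]; module
  have hNab : ‖b‖ ≤ ‖a‖ := hN x y
  have h1θ : (0:ℝ) ≤ 1 - θ := by linarith
  have e1 : ‖P x - P y‖ ^ 2 = (1-θ)^2 * ‖a‖^2 + 2*((1-θ)*θ) * (inner ℝ a b : ℝ) + θ^2 * ‖b‖^2 := by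
    rw [hpq, norm_add_sq_real, norm_smul, norm_smul, real_inner_smul_left,
      real_inner_smul_right, Real.norm_eq_abs, Real.norm_eq_abs,
      abs_of_nonneg h1θ, abs_of_pos hθ0]
    ring
  have e2 : ‖a - b‖ ^ 2 = ‖a‖^2 - 2 * (inner ℝ a b : ℝ) + ‖b‖^2 := norm_sub_sq_real a b
  have hab2 : θ * (‖a‖^2 - ‖b‖^2) ≥ 0 := by
    have : ‖b‖^2 ≤ ‖a‖^2 := by nlinarith [norm_nonneg b, norm_nonneg a]
    nlinarith
  have key : ‖P x - P y‖ ^ 2 ≤ ‖a‖^2 - θ*(1-θ) * ‖a-b‖^2 := by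
    rw [e1, e2]; nlinarith [hab2]
  have hunorm : ‖u‖ = θ * ‖a - b‖ := by
    rw [hu, norm_smul, Real.norm_eq_abs, abs_of_pos hθ0]
  have hw : (x - D (P x)) - (y - D (P y)) = u + v := by
    rw [hu0, hv0]; abel
  have hvA : ‖v‖ ≤ ‖u + v‖ + θ * ‖a - b‖ := by
    calc ‖v‖ = ‖(u + v) - u‖ := by rw [add_sub_cancel_left]
      _ ≤ ‖u + v‖ + ‖u‖ := norm_sub_le _ _
      _ = ‖u + v‖ + θ * ‖a - b‖ := by rw [hunorm]
  have hscalar := stmt_5_aux k θ ‖u+v‖ ‖a-b‖ ‖v‖ hk0 hθ0 hkθ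
    (norm_nonneg _) (norm_nonneg _) (norm_nonneg _) hvA
  have hDP := hD (P x) (P y)
  rw [hw]
  calc ‖D (P x) - D (P y)‖ ^ 2
      ≤ ‖P x - P y‖ ^ 2 + k * ‖v‖ ^ 2 := hDP
    _ ≤ (‖a‖^2 - θ*(1-θ) * ‖a-b‖^2) +
        ((k * (1 - θ) / ((1 - θ) - k * θ)) * ‖u+v‖^2 + θ*(1-θ) * ‖a-b‖^2) := by linarith
    _ = ‖x - y‖^2 + (k * (1 - θ) / ((1 - θ) - k * θ)) * ‖u+v‖^2 := by rw [ha]; ring
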